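/- Let R be an integral domain with fraction field Q, let H be a finitely generated R-module with dim_Q(Q⊗_R H) = g, admitting a presentation of deficiency g, with Alexander function 𝒜 : Λ^g H → R. Then 𝒜 ≠ 0. Conversely, if H admits a presentation of deficiency g and dim_Q(Q⊗_R H) ≠ g (equivalently > g), then 𝒜 = 0. -/

import Mathlib

open TensorProduct

lemma det_of_iotaMulti_eq {R : Type} [CommRing R] {n : ℕ}
    (v : Fin n → (Fin n → R)) (c : R)
    (h : ExteriorAlgebra.ιMulti R n v
        = c • ExteriorAlgebra.ιMulti R n (fun i => Pi.single i (1 : R))) :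
    (Pi.basisFun R (Fin n)).det v = c := by
  classical
  set D := (Pi.basisFun R (Fin n)).det with hD
  set f : ∀ i, (Fin n → R) [⋀^Fin i]→ₗ[R] R := fun i =>
    if h : i = n then D.domDomCongr (finCongr h.symm) else 0 with hf
  have h2 := congrArg (ExteriorAlgebra.liftAlternating f) h
  rw [map_smul, ExteriorAlgebra.liftAlternating_apply_ιMulti,
    ExteriorAlgebra.liftAlternating_apply_ιMulti] at h2
  have hfn : f n = D.domDomCongr (finCongr rfl) := by rw [hf]; simp
  rw [hfn] at h2
  simp only [finCongr_refl, AlternatingMap.domDomCongr_refl] at h2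
  have hb : (fun i : Fin n => (Pi.single i (1 : R) : Fin n → R))
      = ⇑(Pi.basisFun R (Fin n)) := by
    funext i; exact (Pi.basisFun_apply R (Fin n) i).symm
  rw [hb] at h2
  rw [h2, hD, Module.Basis.det_self, smul_eq_mul, mul_one]

lemma prod_append_eq_iotaMulti {R : Type} [CommRing R] {N : Type} [AddCommGroup N] [Module R N]
    {r g : ℕ} (a : Fin r → N) (b : Fin g → N) :
    (List.ofFn fun i => ExteriorAlgebra.ι R (a i)).prod *
      (List.ofFn fun i => ExteriorAlgebra.ι R (b i)).prod
    = ExteriorAlgebra.ιMulti R (g + r)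
        (fun i => Fin.append a b (Fin.cast (Nat.add_comm g r) i)) := by
  rw [ExteriorAlgebra.ιMulti_apply]
  rw [← List.ofFn_congr (Nat.add_comm r g)
    (fun k : Fin (r + g) => ExteriorAlgebra.ι R (Fin.append a b k))]
  rw [List.ofFn_add, List.prod_append]
  simp [Fin.append_left, Fin.append_right]


/-- nontriviality of the Alexander function.  For a module `H` with a
presentation of deficiency `g` and Alexander function `𝒜`, one has `𝒜 ≠ 0` if
`dim_Q(Q ⊗_R H) = g`, and `𝒜 = 0` if `dim_Q(Q ⊗_R H) ≠ g`. -/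
theorem stmt15 (R : Type) [CommRing R] [IsDomain R]
    (Q : Type) [Field Q] [Algebra R Q] [IsFractionRing R Q]
    (H : Type) [AddCommGroup H] [Module R H] [Module.Finite R H]
    (g r : ℕ)
    -- a presentation `⟨γ₁,…,γ_{g+r} | rel₁,…,rel_r⟩` of `H` of deficiency `g`:
    (pr : (Fin (g + r) → R) →ₗ[R] H) (hpr : Function.Surjective pr)
    (rel : Fin r → (Fin (g + r) → R))
    (hker : LinearMap.ker pr = Submodule.span R (Set.range rel))
    -- the Alexander function `𝒜 : Λ^g H → R` of this presentation:
    (Alex : (Fin g → H) → R)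
    (hAlex : ∀ (u : Fin g → H) (lift : Fin g → (Fin (g + r) → R)),
      (∀ i, pr (lift i) = u i) →
      (List.ofFn fun i => ExteriorAlgebra.ι R (rel i)).prod *
          (List.ofFn fun i => ExteriorAlgebra.ι R (lift i)).prod =
        Alex u • (List.ofFn fun i : Fin (g + r) =>
          ExteriorAlgebra.ι R (Pi.single i (1 : R))).prod) :
    (Module.finrank Q (Q ⊗[R] H) = g → ∃ y : Fin g → H, Alex y ≠ 0) ∧
    (Module.finrank Q (Q ⊗[R] H) ≠ g → ∀ y : Fin g → H, Alex y = 0) := by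
  classical
  -- the determinant formula for the Alexander function
  have bridge : ∀ (u : Fin g → H) (lift : Fin g → (Fin (g + r) → R)),
      (∀ i, pr (lift i) = u i) →
      Alex u = (Pi.basisFun R (Fin (g + r))).det
        (fun i => Fin.append rel lift (Fin.cast (Nat.add_comm g r) i)) := by
    intro u lift hl
    refine (det_of_iotaMulti_eq _ _ ?_).symm
    rw [← prod_append_eq_iotaMulti, hAlex u lift hl, ExteriorAlgebra.ιMulti_apply]
  -- base change maps
  set AQ : (Fin (g + r) → R) →ₗ[R] (Fin (g + r) → Q) :=
    LinearMap.pi (fun j => (Algebra.linearMap R Q).comp (LinearMap.proj j)) with hAQdef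
  have hAQapp : ∀ (x : Fin (g + r) → R) (j : Fin (g + r)),
      AQ x j = algebraMap R Q (x j) := fun x j => rfl
  set prQ : (Fin (g + r) → Q) →ₗ[Q] (Q ⊗[R] H) :=
    (Pi.basisFun Q (Fin (g + r))).constr Q
      (fun i => (1 : Q) ⊗ₜ[R] pr (Pi.single i (1 : R))) with hprQdef
  have prQ_apply : ∀ v : Fin (g + r) → Q,
      prQ v = ∑ i, v i • ((1 : Q) ⊗ₜ[R] pr (Pi.single i (1 : R))) := by
    intro v
    rw [hprQdef, Module.Basis.constr_apply_fintype]
    simp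
  -- compatibility of prQ with pr
  have hAQ : ∀ x : Fin (g + r) → R, prQ (AQ x) = (1 : Q) ⊗ₜ[R] pr x := by
    intro x
    have hx : pr x = ∑ i, x i • pr (Pi.single i (1 : R)) := by
      conv_lhs => rw [← Finset.univ_sum_single x]
      rw [map_sum]
      refine Finset.sum_congr rfl fun i _ => ?_
      rw [← map_smul]
      congr 1
      rw [← Pi.single_smul, smul_eq_mul, mul_one]
    rw [prQ_apply, hx, tmul_sum]
    refine Finset.sum_congr rfl fun i _ => ?_
    rw [hAQapp, tmul_smul, algebraMap_smul]
  -- surjectivity of prQ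
  have hsurj : Function.Surjective prQ := by
    intro z
    induction z using TensorProduct.induction_on with
    | zero => exact ⟨0, map_zero _⟩
    | tmul q h =>
      obtain ⟨x, rfl⟩ := hpr h
      refine ⟨q • AQ x, ?_⟩
      rw [map_smul, hAQ, smul_tmul', smul_eq_mul, mul_one]
    | add a b ha hb =>
      obtain ⟨x, rfl⟩ := ha
      obtain ⟨y, rfl⟩ := hb
      exact ⟨x + y, map_add _ _ _⟩
  -- relations go to zero
  have hrel0 : ∀ i, prQ (AQ (rel i)) = 0 := by
    intro i
    have : pr (rel i) = 0 := by
      have : rel i ∈ LinearMap.ker pr := by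
        rw [hker]; exact Submodule.subset_span ⟨i, rfl⟩
      exact this
    rw [hAQ, this, tmul_zero]
  -- torsion characterisation of the kernel of H → Q ⊗ H
  have hloc : IsLocalizedModule (nonZeroDivisors R) (TensorProduct.mk R Q H 1) :=
    (isLocalizedModule_iff_isBaseChange (nonZeroDivisors R) Q _).mpr
      (TensorProduct.isBaseChange R H Q)
  have htor : ∀ h : H, (1 : Q) ⊗ₜ[R] h = 0 → ∃ s : nonZeroDivisors R, (s : R) • h = 0 := by
    intro h hh
    exact (IsLocalizedModule.eq_zero_iff (nonZeroDivisors R)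
      (TensorProduct.mk R Q H 1)).mp hh
  -- kernel of prQ equals the span of the relations
  have hkerQ : LinearMap.ker prQ = Submodule.span Q (Set.range (fun i => AQ (rel i))) := by
    refine le_antisymm ?_ ?_
    · intro v hv
      rw [LinearMap.mem_ker] at hv
      obtain ⟨d, hd⟩ := IsLocalization.exist_integer_multiples_of_finite
        (nonZeroDivisors R) v
      choose x hx using hd
      have h1 : AQ x = (d : R) • v := funext fun j => hx j
      have h2 : (1 : Q) ⊗ₜ[R] pr x = 0 := by
        rw [← hAQ, h1, ← algebraMap_smul Q (d : R) v, map_smul, hv, smul_zero]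
      obtain ⟨s, hs⟩ := htor _ h2
      have h3 : (s : R) • x ∈ Submodule.span R (Set.range rel) := by
        rw [← hker, LinearMap.mem_ker, map_smul, hs]
      have h4 : AQ ((s : R) • x) ∈
          Submodule.span Q (Set.range (fun i => AQ (rel i))) := by
        have hsub : Submodule.map AQ (Submodule.span R (Set.range rel)) ≤
            (Submodule.span Q (Set.range (fun i => AQ (rel i)))).restrictScalars R := by
          rw [Submodule.map_span]
          rw [Submodule.span_le]
          rintro _ ⟨_, ⟨i, rfl⟩, rfl⟩
          exact Submodule.subset_span ⟨i, rfl⟩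
        exact hsub ⟨(s : R) • x, h3, rfl⟩
      have hds : algebraMap R Q (d : R) ≠ 0 :=
        IsFractionRing.to_map_ne_zero_of_mem_nonZeroDivisors d.2
      have hss : algebraMap R Q (s : R) ≠ 0 :=
        IsFractionRing.to_map_ne_zero_of_mem_nonZeroDivisors s.2
      have h5 : (algebraMap R Q (s : R))⁻¹ • (algebraMap R Q (d : R))⁻¹ •
          AQ ((s : R) • x) = v := by
        rw [map_smul, h1, ← algebraMap_smul Q (d : R) v,
          ← algebraMap_smul Q (s : R) (algebraMap R Q (d : R) • v),
          smul_smul, smul_smul, smul_smul]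
        have hc : (algebraMap R Q (s : R))⁻¹ * (algebraMap R Q (d : R))⁻¹ *
            algebraMap R Q (s : R) * algebraMap R Q (d : R) = 1 := by
          field_simp
        rw [hc, one_smul]
      rw [← h5]
      exact Submodule.smul_mem _ _ (Submodule.smul_mem _ _ h4)
    · rw [Submodule.span_le]
      rintro _ ⟨i, rfl⟩
      exact LinearMap.mem_ker.mpr (hrel0 i)
  -- rank-nullity
  have hfd : FiniteDimensional Q (Q ⊗[R] H) := Module.Finite.base_change R Q H
  have hrange : LinearMap.range prQ = ⊤ := LinearMap.range_eq_top.mpr hsurj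
  have hrank : Module.finrank Q (Q ⊗[R] H) + Module.finrank Q (LinearMap.ker prQ)
      = g + r := by
    have h1 := LinearMap.finrank_range_add_finrank_ker prQ
    rw [hrange, finrank_top, Module.finrank_pi, Fintype.card_fin] at h1
    exact h1
  -- determinant commutes with the base change R → Q
  have hmapdet : ∀ lift : Fin g → (Fin (g + r) → R),
      (Pi.basisFun Q (Fin (g + r))).det
          (fun i => AQ (Fin.append rel lift (Fin.cast (Nat.add_comm g r) i)))
        = algebraMap R Q ((Pi.basisFun R (Fin (g + r))).det
            (fun i => Fin.append rel lift (Fin.cast (Nat.add_comm g r) i))) := by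
    intro lift
    have hM : (Pi.basisFun Q (Fin (g + r))).toMatrix
          (fun i => AQ (Fin.append rel lift (Fin.cast (Nat.add_comm g r) i)))
        = ((Pi.basisFun R (Fin (g + r))).toMatrix
            (fun i => Fin.append rel lift (Fin.cast (Nat.add_comm g r) i))).map
          (algebraMap R Q) := by
      ext i j
      simp [Module.Basis.toMatrix_apply, hAQapp, Matrix.map_apply]
    rw [Module.Basis.det_apply, Module.Basis.det_apply, RingHom.map_det, hM]
    rfl
  constructor
  · -- dim = g : Alexander function is nonzero somewhere
    intro hdim
    have hkerr : Module.finrank Q (LinearMap.ker prQ) = r := by omega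
    have hindrel : LinearIndependent Q (fun i => AQ (rel i)) := by
      rw [linearIndependent_iff_card_eq_finrank_span, Fintype.card_fin]
      rw [Set.finrank, hkerQ.symm, hkerr]
    -- choose a basis of Q ⊗ H among the images of the standard generators
    have hspan : Submodule.span Q
        (Set.range fun i : Fin (g + r) => (1 : Q) ⊗ₜ[R] pr (Pi.single i (1 : R))) = ⊤ := by
      rw [eq_top_iff]
      rintro z -
      obtain ⟨v, rfl⟩ := hsurj z
      rw [prQ_apply]
      exact Submodule.sum_mem _ fun i _ =>
        Submodule.smul_mem _ _ (Submodule.subset_span ⟨i, rfl⟩)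
    obtain ⟨t, hts, hspant, hindt⟩ := exists_linearIndependent Q
      (Set.range fun i : Fin (g + r) => (1 : Q) ⊗ₜ[R] pr (Pi.single i (1 : R)))
    have htfin : t.Finite := hindt.setFinite
    haveI := htfin.fintype
    have hbt : ⊤ ≤ Submodule.span Q (Set.range (fun x : t => (x : Q ⊗[R] H))) := by
      rw [Subtype.range_coe, hspant, hspan]
    let b : Module.Basis t Q (Q ⊗[R] H) := Module.Basis.mk hindt hbt
    have hcardt : Fintype.card t = g := by
      have := Module.finrank_eq_card_basis b
      omega
    let e : Fin g ≃ t := (Fintype.equivFinOfCardEq hcardt).symm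
    have hmem : ∀ i : Fin g, ((e i : Q ⊗[R] H)) ∈
        Set.range fun i : Fin (g + r) => (1 : Q) ⊗ₜ[R] pr (Pi.single i (1 : R)) :=
      fun i => hts (e i).2
    choose ind hind using hmem
    set lift : Fin g → (Fin (g + r) → R) := fun i => Pi.single (ind i) (1 : R) with hliftdef
    set W : Fin (g + r) → (Fin (g + r) → Q) :=
      fun i => AQ (Fin.append rel lift (Fin.cast (Nat.add_comm g r) i)) with hW
    have hbe : LinearIndependent Q (fun j : Fin g => ((e j : Q ⊗[R] H))) := by
      have h1 := b.linearIndependent.comp e e.injective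
      have h2 : (fun j : Fin g => ((e j : Q ⊗[R] H))) = ⇑b ∘ ⇑e := by
        funext j
        simp [b, Module.Basis.mk_apply]
      rw [h2]
      exact h1
    have hindW : LinearIndependent Q W := by
      rw [Fintype.linearIndependent_iff]
      intro c hc
      have hsum : ∑ k : Fin (r + g),
          c (Fin.cast (Nat.add_comm r g) k) • AQ (Fin.append rel lift k) = 0 := by
        rw [← hc]
        apply Fintype.sum_equiv (finCongr (Nat.add_comm r g))
        intro k
        have hkk : Fin.cast (Nat.add_comm g r) (Fin.cast (Nat.add_comm r g) k) = k := by
          simp [Fin.ext_iff]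
        simp only [hW, finCongr_apply]
        rw [hkk]
      rw [Fin.sum_univ_add] at hsum
      simp only [Fin.append_left, Fin.append_right] at hsum
      have h2 : ∑ j : Fin g,
          c (Fin.cast (Nat.add_comm r g) (Fin.natAdd r j)) • ((e j : Q ⊗[R] H)) = 0 := by
        have h3 := congrArg prQ hsum
        rw [map_zero, map_add, map_sum, map_sum] at h3
        simp only [map_smul, hrel0, smul_zero, Finset.sum_const_zero, zero_add] at h3
        rw [← h3]
        refine Finset.sum_congr rfl fun j _ => ?_
        rw [hAQ]
        congr 1
        exact (hind j).symm
      have hz2 : ∀ j : Fin g, c (Fin.cast (Nat.add_comm r g) (Fin.natAdd r j)) = 0 :=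
        Fintype.linearIndependent_iff.mp hbe _ h2
      have hz1 : ∀ i : Fin r, c (Fin.cast (Nat.add_comm r g) (Fin.castAdd g i)) = 0 := by
        apply Fintype.linearIndependent_iff.mp hindrel
        have hB : ∑ j : Fin g,
            c (Fin.cast (Nat.add_comm r g) (Fin.natAdd r j)) • AQ (lift j) = 0 :=
          Finset.sum_eq_zero fun j _ => by rw [hz2 j, zero_smul]
        rw [hB, add_zero] at hsum
        exact hsum
      intro i
      have hall : ∀ k : Fin (r + g), c (Fin.cast (Nat.add_comm r g) k) = 0 := by
        intro k
        refine Fin.addCases (motive := fun k => c (Fin.cast (Nat.add_comm r g) k) = 0)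
          (fun i => hz1 i) (fun j => hz2 j) k
      have := hall (Fin.cast (Nat.add_comm g r) i)
      rwa [show Fin.cast (Nat.add_comm r g) (Fin.cast (Nat.add_comm g r) i) = i from by
        simp [Fin.ext_iff]] at this
    have hspanW : Submodule.span Q (Set.range W) = ⊤ := by
      apply hindW.span_eq_top_of_card_eq_finrank'
      rw [Module.finrank_pi]
    have hdetW : IsUnit ((Pi.basisFun Q (Fin (g + r))).det W) :=
      (Module.Basis.is_basis_iff_det _).mp ⟨hindW, hspanW⟩
    refine ⟨fun i => pr (lift i), fun h0 => ?_⟩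
    have hb := bridge (fun i => pr (lift i)) lift (fun i => rfl)
    rw [h0] at hb
    have : (Pi.basisFun Q (Fin (g + r))).det W = 0 := by
      rw [hW, hmapdet lift, ← hb, map_zero]
    exact hdetW.ne_zero this
  · -- dim ≠ g : Alexander function vanishes
    intro hdim y
    have hdep : ¬ LinearIndependent Q (fun i => AQ (rel i)) := by
      intro hind
      apply hdim
      have h1 : Module.finrank Q (LinearMap.ker prQ) = r := by
        rw [hkerQ]
        rw [finrank_span_eq_card hind]
        simp
      omega
    -- pick lifts
    choose lift hlift using fun i => hpr (y i)
    have hb := bridge y lift hlift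
    set W : Fin (g + r) → (Fin (g + r) → Q) :=
      fun i => AQ (Fin.append rel lift (Fin.cast (Nat.add_comm g r) i)) with hW
    have hWdep : ¬ LinearIndependent Q W := by
      intro hind
      apply hdep
      have hinj : Function.Injective
          (fun k : Fin r => Fin.cast (Nat.add_comm r g) (Fin.castAdd g k)) := by
        intro a b hab
        simpa [Fin.ext_iff] using hab
      have := hind.comp _ hinj
      convert this using 1
      funext k
      rw [hW]
      congr 1
      simp [Fin.append_left, Fin.ext_iff]
    have hdet0 : (Pi.basisFun Q (Fin (g + r))).det W = 0 :=
      AlternatingMap.map_linearDependent _ _ hWdep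
    -- transport the determinant along algebraMap
    have hmap : (Pi.basisFun Q (Fin (g + r))).det W
        = algebraMap R Q ((Pi.basisFun R (Fin (g + r))).det
            (fun i => Fin.append rel lift (Fin.cast (Nat.add_comm g r) i))) := by
      rw [hW]; exact hmapdet lift
    rw [hdet0] at hmap
    have h0 : ((Pi.basisFun R (Fin (g + r))).det
        (fun i => Fin.append rel lift (Fin.cast (Nat.add_comm g r) i))) = 0 := by
      apply IsFractionRing.injective R Q
      rw [← hmap, map_zero]
    rw [hb, h0]
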